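/- Let H be a Hilbert space, S_M a closed subspace, and K_s = {f ∈ H : dist(f, R_N) ≤ ε_N and P_{S_M} f = s}. For the PBDW map A*(s) = s + P_{S_M}^⊥ g* with g* = argmin_{g∈R_N} ‖s − P_{S_M} g‖, and for any f ∈ H with P_{S_M} f = s: ‖f − A*(s)‖ ≤ μ(R_N, S_M) · dist(f, R_N ⊕ (S_M ∩ R_N^⊥)), where μ(R_N,S_M) = 1/inf_{r∈R_N,‖r‖=1}‖P_{S_M}r‖ is assumed finite. -/

import Mathlib

open MeasureTheory
open scoped RealInnerProductSpace

private lemma pbdw_aux {c p q x n m w2 M : ℝ}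
    (hc : 0 < c) (hc1 : c ≤ 1)
    (hq : 0 ≤ q) (hn : 0 ≤ n) (hM : 0 ≤ M) (hw2 : 0 ≤ w2)
    (hx : 0 ≤ x)
    (hpyth : p ^ 2 + q ^ 2 = x ^ 2)
    (hcx : c * x ≤ p)
    (hm1 : n - q ≤ m) (hm2 : q - n ≤ m)
    (hMsq : M ^ 2 = m ^ 2 + p ^ 2 + w2) :
    c * n ≤ M := by
  have hp2 : c ^ 2 * (p ^ 2 + q ^ 2) ≤ p ^ 2 := by
    nlinarith [mul_nonneg hc.le hx, sq_nonneg (p - c * x), sq_nonneg c]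
  have key : (c * n) ^ 2 ≤ M ^ 2 := by
    rcases le_or_gt q n with h | h
    · have hmq : (n - q) ^ 2 ≤ m ^ 2 := by nlinarith
      by_cases hceq : c = 1
      · subst hceq
        have hq2 : q ^ 2 = 0 := le_antisymm (by nlinarith) (sq_nonneg q)
        have hq0 : q = 0 := pow_eq_zero_iff (n := 2) (by norm_num) |>.mp hq2
        rw [hq0] at hmq
        nlinarith
      · have hclt : c < 1 := lt_of_le_of_ne hc1 hceq
        have ht : 0 < 1 - c ^ 2 := by nlinarith
        nlinarith [sq_nonneg ((1 - c ^ 2) * n - q), hmq, hw2, hp2]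
    · have hq2 : n ^ 2 ≤ q ^ 2 := by nlinarith
      nlinarith [hp2, mul_le_mul_of_nonneg_left hq2 (sq_nonneg c), sq_nonneg m]
  calc c * n = √((c * n) ^ 2) := (Real.sqrt_sq (by positivity)).symm
    _ ≤ √(M ^ 2) := Real.sqrt_le_sqrt key
    _ = M := Real.sqrt_sq hM

theorem pbdw_improved_error_bound (H : Type*) [NormedAddCommGroup H]
    [InnerProductSpace ℝ H] [CompleteSpace H]
    (RN SM : Submodule ℝ H) [FiniteDimensional ℝ RN] [Submodule.HasOrthogonalProjection SM]
    (c : ℝ)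
    (hc : c = sInf {y : ℝ | ∃ r ∈ RN, ‖r‖ = 1 ∧ y = ‖(Submodule.orthogonalProjectionOnto SM r : H)‖})
    (hcpos : 0 < c) (f s : H) (hs : (Submodule.orthogonalProjectionOnto SM f : H) = s)
    (g : H) (hg : g ∈ RN)
    (hmin : ∀ g' ∈ RN,
      ‖s - (Submodule.orthogonalProjectionOnto SM g : H)‖ ≤ ‖s - (Submodule.orthogonalProjectionOnto SM g' : H)‖) :
    ‖f - (s + (g - (Submodule.orthogonalProjectionOnto SM g : H)))‖ ≤
      (1 / c) * Metric.infDist f ((RN ⊔ (SM ⊓ RNᗮ) : Submodule ℝ H) : Set H) := by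
  classical
  set S : Set ℝ := {y : ℝ | ∃ r ∈ RN, ‖r‖ = 1 ∧ y = ‖(Submodule.orthogonalProjectionOnto SM r : H)‖} with hS
  have hbdd : BddBelow S := ⟨0, by rintro y ⟨r, -, -, rfl⟩; exact norm_nonneg _⟩
  -- lower bound c * ‖r‖ ≤ ‖P r‖ for r ∈ RN
  have hclow : ∀ r ∈ RN, c * ‖r‖ ≤ ‖(Submodule.orthogonalProjectionOnto SM r : H)‖ := by
    intro r hr
    rcases eq_or_ne r 0 with rfl | hr0
    · simp
    · have hrn : (0:ℝ) < ‖r‖ := norm_pos_iff.mpr hr0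
      have hmem : ‖(Submodule.orthogonalProjectionOnto SM (‖r‖⁻¹ • r) : H)‖ ∈ S := by
        refine ⟨‖r‖⁻¹ • r, RN.smul_mem _ hr, ?_, rfl⟩
        rw [norm_smul, norm_inv, norm_norm, inv_mul_cancel₀ hrn.ne']
      have hle : c ≤ ‖(Submodule.orthogonalProjectionOnto SM (‖r‖⁻¹ • r) : H)‖ := hc ▸ csInf_le hbdd hmem
      have heq : ‖(Submodule.orthogonalProjectionOnto SM (‖r‖⁻¹ • r) : H)‖ = ‖r‖⁻¹ * ‖(Submodule.orthogonalProjectionOnto SM r : H)‖ := by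
        rw [_root_.map_smul, Submodule.coe_smul, norm_smul, norm_inv, norm_norm]
      rw [heq] at hle
      calc c * ‖r‖ ≤ (‖r‖⁻¹ * ‖(Submodule.orthogonalProjectionOnto SM r : H)‖) * ‖r‖ :=
            mul_le_mul_of_nonneg_right hle hrn.le
        _ = ‖(Submodule.orthogonalProjectionOnto SM r : H)‖ := by field_simp
  -- Pythagoras for the orthogonal projection
  have hpyth : ∀ x : H, ‖(Submodule.orthogonalProjectionOnto SM x : H)‖ ^ 2 + ‖x - (Submodule.orthogonalProjectionOnto SM x : H)‖ ^ 2 = ‖x‖ ^ 2 := by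
    intro x
    have h0 : ⟪((Submodule.orthogonalProjectionOnto SM x : H)), x - (Submodule.orthogonalProjectionOnto SM x : H)⟫ = 0 :=
      Submodule.inner_right_of_mem_orthogonal (SetLike.coe_mem _)
        (Submodule.sub_starProjection_mem_orthogonal (K := SM) x)
    have := norm_add_sq_real ((Submodule.orthogonalProjectionOnto SM x : H)) (x - (Submodule.orthogonalProjectionOnto SM x : H))
    rw [h0] at this
    simp only [add_sub_cancel] at this
    linarith
  -- c ≤ 1
  have hSne : S.Nonempty := by
    by_contra h
    rw [Set.not_nonempty_iff_eq_empty] at h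
    rw [hc, h, Real.sInf_empty] at hcpos
    exact lt_irrefl 0 hcpos
  have hc1 : c ≤ 1 := by
    obtain ⟨y, r, hr, hr1, rfl⟩ := hSne
    have h1 : c ≤ ‖(Submodule.orthogonalProjectionOnto SM r : H)‖ := hc ▸ csInf_le hbdd ⟨r, hr, hr1, rfl⟩
    have h2 : ‖(Submodule.orthogonalProjectionOnto SM r : H)‖ ^ 2 ≤ ‖r‖ ^ 2 := by
      have := hpyth r; nlinarith [sq_nonneg ‖r - (Submodule.orthogonalProjectionOnto SM r : H)‖]
    have h3 : ‖(Submodule.orthogonalProjectionOnto SM r : H)‖ ≤ 1 := by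
      rw [hr1] at h2; nlinarith [norm_nonneg ((Submodule.orthogonalProjectionOnto SM r : H))]
    linarith
  -- orthogonality from minimality
  have horth : ∀ r ∈ RN, ⟪s - (Submodule.orthogonalProjectionOnto SM g : H), (Submodule.orthogonalProjectionOnto SM r : H)⟫ = 0 := by
    intro r hr
    set d := s - (Submodule.orthogonalProjectionOnto SM g : H) with hd
    set Pr := ((Submodule.orthogonalProjectionOnto SM r : H)) with hPr
    set a := ⟪d, Pr⟫ with ha
    set b := ‖Pr‖ ^ 2 with hb
    have hb0 : 0 ≤ b := by positivity
    have key : ∀ t : ℝ, 0 ≤ 2 * t * a + t ^ 2 * b := by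
      intro t
      have h := hmin (g - t • r) (RN.sub_mem hg (RN.smul_mem t hr))
      have hproj : (Submodule.orthogonalProjectionOnto SM (g - t • r) : H)
          = (Submodule.orthogonalProjectionOnto SM g : H) - t • Pr := by
        rw [map_sub, _root_.map_smul]; push_cast; rfl
      rw [hproj] at h
      have heq : s - ((Submodule.orthogonalProjectionOnto SM g : H) - t • Pr) = d + t • Pr := by
        rw [hd]; abel
      rw [heq] at h
      have hsq : ‖d + t • Pr‖ ^ 2 = ‖d‖ ^ 2 + 2 * t * a + t ^ 2 * b := by
        rw [norm_add_sq_real, real_inner_smul_right, norm_smul]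
        rw [Real.norm_eq_abs, mul_pow, sq_abs]
        simp only [ha, hb]
        ring
      nlinarith [norm_nonneg d, norm_nonneg (d + t • Pr), h, hsq]
    have hb1 : (0:ℝ) < b + 1 := by linarith
    have h := key (-(a / (b + 1)))
    have h3 : 0 ≤ (b + 1) ^ 2 * (2 * (-(a / (b + 1))) * a + (-(a / (b + 1))) ^ 2 * b) :=
      mul_nonneg (by positivity) h
    have h4 : (b + 1) ^ 2 * (2 * (-(a / (b + 1))) * a + (-(a / (b + 1))) ^ 2 * b)
        = -(a ^ 2) * (b + 2) := by
      field_simp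
      ring
    rw [h4] at h3
    have : a ^ 2 = 0 := le_antisymm (by nlinarith) (sq_nonneg a)
    have := pow_eq_zero_iff (n := 2) (by norm_num) |>.mp this
    exact this
    -- the correction term lies in SM ⊓ RNᗮ
  have hsm : s - (Submodule.orthogonalProjectionOnto SM g : H) ∈ SM := by
    rw [← hs]; exact Submodule.sub_mem SM (SetLike.coe_mem _) (SetLike.coe_mem _)
  have hWmem : s - (Submodule.orthogonalProjectionOnto SM g : H) ∈ SM ⊓ RNᗮ := by
    refine Submodule.mem_inf.mpr ⟨hsm, Submodule.mem_orthogonal _ _ |>.mpr ?_⟩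
    intro u hu
    have h1 : ⟪(Submodule.orthogonalProjectionOnto SM u : H), s - (Submodule.orthogonalProjectionOnto SM g : H)⟫ = 0 := by
      rw [real_inner_comm]; exact horth u hu
    have h2 : ⟪u - (Submodule.orthogonalProjectionOnto SM u : H), s - (Submodule.orthogonalProjectionOnto SM g : H)⟫ = 0 :=
      Submodule.inner_left_of_mem_orthogonal hsm (Submodule.sub_starProjection_mem_orthogonal (K := SM) u)
    have hu' : (Submodule.orthogonalProjectionOnto SM u : H) + (u - (Submodule.orthogonalProjectionOnto SM u : H)) = u := by
      abel
    rw [← hu', inner_add_left, h1, h2, add_zero]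
  set V := (RN ⊔ (SM ⊓ RNᗮ) : Submodule ℝ H) with hV
  have hustar : s + (g - (Submodule.orthogonalProjectionOnto SM g : H)) ∈ V := by
    have heq : s + (g - (Submodule.orthogonalProjectionOnto SM g : H))
        = g + (s - (Submodule.orthogonalProjectionOnto SM g : H)) := by abel
    rw [heq]
    exact V.add_mem (Submodule.mem_sup_left hg) (Submodule.mem_sup_right hWmem)
  have hetamem : f - (s + (g - (Submodule.orthogonalProjectionOnto SM g : H))) ∈ SMᗮ := by
    have hsub : (Submodule.orthogonalProjectionOnto SM (f - g) : H) = s - (Submodule.orthogonalProjectionOnto SM g : H) := by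
      rw [map_sub, Submodule.coe_sub, hs]
    have heq : f - (s + (g - (Submodule.orthogonalProjectionOnto SM g : H)))
        = (f - g) - (Submodule.orthogonalProjectionOnto SM (f - g) : H) := by
      rw [hsub]; abel
    rw [heq]
    exact Submodule.sub_starProjection_mem_orthogonal (K := SM) (f - g)
  -- pointwise bound
  have hpoint : ∀ v ∈ V, c * ‖f - (s + (g - (Submodule.orthogonalProjectionOnto SM g : H)))‖ ≤ ‖f - v‖ := by
    intro v hv
    set η := f - (s + (g - (Submodule.orthogonalProjectionOnto SM g : H))) with heta
    have hv' : v - (s + (g - (Submodule.orthogonalProjectionOnto SM g : H))) ∈ V := V.sub_mem hv hustar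
    obtain ⟨r, hr, w, hw, hrw⟩ := Submodule.mem_sup.mp hv'
    have hfv : f - v = η - (r + w) := by rw [heta, hrw]; abel
    set Pr := ((Submodule.orthogonalProjectionOnto SM r : H)) with hPrdef
    set Qr := r - Pr with hQrdef
    have haQ : Qr ∈ SMᗮ := Submodule.sub_starProjection_mem_orthogonal (K := SM) r
    have haeta : η - Qr ∈ SMᗮ := Submodule.sub_mem _ hetamem haQ
    have hbSM : Pr + w ∈ SM := SM.add_mem (SetLike.coe_mem _) hw.1
    have hab : η - (r + w) = (η - Qr) - (Pr + w) := by rw [hQrdef]; abel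
    have hinner : ⟪η - Qr, Pr + w⟫ = 0 := by
      rw [real_inner_comm]
      exact Submodule.inner_right_of_mem_orthogonal hbSM haeta
    have hM2 : ‖η - (r + w)‖ ^ 2 = ‖η - Qr‖ ^ 2 + ‖Pr + w‖ ^ 2 := by
      rw [hab, norm_sub_sq_real, hinner]; ring
    have hPrw : ⟪Pr, w⟫ = 0 := by
      have h1 : ⟪r, w⟫ = 0 := Submodule.inner_right_of_mem_orthogonal hr hw.2
      have h2 : ⟪Qr, w⟫ = 0 := Submodule.inner_left_of_mem_orthogonal hw.1 haQ
      have hrPQ : Pr = r - Qr := by rw [hQrdef]; abel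
      rw [hrPQ, inner_sub_left, h1, h2, sub_zero]
    have hb2 : ‖Pr + w‖ ^ 2 = ‖Pr‖ ^ 2 + ‖w‖ ^ 2 := by
      rw [norm_add_sq_real, hPrw]; ring
    have hr2 : ‖Pr‖ ^ 2 + ‖Qr‖ ^ 2 = ‖r‖ ^ 2 := hpyth r
    have habs : |‖η‖ - ‖Qr‖| ≤ ‖η - Qr‖ := abs_norm_sub_norm_le η Qr
    obtain ⟨hA, hB⟩ := abs_le.mp habs
    have hm1 : ‖η‖ - ‖Qr‖ ≤ ‖η - Qr‖ := hB
    have hm2 : ‖Qr‖ - ‖η‖ ≤ ‖η - Qr‖ := by linarith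
    have hMsq : ‖η - (r + w)‖ ^ 2 = ‖η - Qr‖ ^ 2 + ‖Pr‖ ^ 2 + ‖w‖ ^ 2 := by
      rw [hM2, hb2]; ring
    have hfin : c * ‖η‖ ≤ ‖η - (r + w)‖ :=
      pbdw_aux hcpos hc1 (norm_nonneg Qr) (norm_nonneg η) (norm_nonneg (η - (r + w)))
        (sq_nonneg ‖w‖) (norm_nonneg r) hr2 (hclow r hr) hm1 hm2 hMsq
    rw [hfv]
    exact hfin
  -- conclude
  have hD : c * ‖f - (s + (g - (Submodule.orthogonalProjectionOnto SM g : H)))‖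
      ≤ Metric.infDist f (V : Set H) := by
    have : Nonempty ((V : Set H)) := ⟨⟨0, V.zero_mem⟩⟩
    rw [Metric.infDist_eq_iInf]
    exact le_ciInf fun y => by rw [dist_eq_norm]; exact hpoint y y.2
  have h1c : (0:ℝ) < 1 / c := by positivity
  calc ‖f - (s + (g - (Submodule.orthogonalProjectionOnto SM g : H)))‖
      = (1 / c) * (c * ‖f - (s + (g - (Submodule.orthogonalProjectionOnto SM g : H)))‖) := by
        field_simp
    _ ≤ (1 / c) * Metric.infDist f (V : Set H) :=
        mul_le_mul_of_nonneg_left hD h1c.le
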